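/- The antilinear map Γ*(C) := Γ(C*) on the Clifford algebra commutes with the operator [Γ(ρ),ρ]# for every strictly positive density ρ: Γ*([Γ(ρ),ρ]#C) = [Γ(ρ),ρ]#Γ*(C) for all C, where [Γ(ρ),ρ]#C = ∫₀¹ Γ(ρ)^{1-s} C ρ^s ds. -/

import Mathlib

open MeasureTheory Matrix
open scoped ComplexOrder

attribute [local instance] Matrix.frobeniusNormedAddCommGroup Matrix.frobeniusNormedSpace

/-- Continuity of `s ↦ cfc (· ^ g s) A` for a Hermitian matrix with positive eigenvalues. -/
lemma continuous_cfc_rpow_aux {m : ℕ} {A : Matrix (Fin m) (Fin m) ℂ} (hA : A.IsHermitian)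
    (hpos : ∀ i, 0 < hA.eigenvalues i) (g : ℝ → ℝ) (hg : Continuous g) :
    Continuous (fun s : ℝ => cfc (fun t : ℝ => t ^ (g s)) A) := by
  have h1 : ∀ s : ℝ, cfc (fun t : ℝ => t ^ (g s)) A = hA.cfc (fun t : ℝ => t ^ (g s)) :=
    fun s => hA.cfc_eq _
  simp only [h1, Matrix.IsHermitian.cfc, Unitary.conjStarAlgAut_apply]
  refine (Continuous.matrix_mul (Continuous.matrix_mul continuous_const ?_) continuous_const)
  refine Continuous.matrix_diagonal ?_
  refine continuous_pi fun i => ?_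
  have : ∀ s : ℝ, (RCLike.ofReal ∘ (fun t : ℝ => t ^ (g s)) ∘ hA.eigenvalues) i
      = (Complex.ofReal (Real.exp (g s * Real.log (hA.eigenvalues i)))) := by
    intro s
    simp [Function.comp, Real.rpow_def_of_pos (hpos i), mul_comm]
  simp only [this]
  exact Complex.continuous_ofReal.comp (Real.continuous_exp.comp (hg.mul continuous_const))

/-- The antilinear map `Γ*(C) = Γ(C*)` commutes with `[Γ(ρ),ρ]#` for every strictly
positive density `ρ`, where `[Γ(ρ),ρ]#C = ∫₀¹ Γ(ρ)^{1-s} C ρ^s ds` and `Γ` is a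
`*`-automorphism (the grading automorphism of the Clifford algebra). -/
theorem gammaStar_commutes_with_sharp {m : ℕ}
    (Γ : Matrix (Fin m) (Fin m) ℂ ≃⋆ₐ[ℂ] Matrix (Fin m) (Fin m) ℂ)
    (hΓΓ : ∀ A, Γ (Γ A) = A)
    (ρ : Matrix (Fin m) (Fin m) ℂ) (hρ : ρ.PosDef)
    (sharp : Matrix (Fin m) (Fin m) ℂ → Matrix (Fin m) (Fin m) ℂ)
    (hsharp : ∀ C, sharp C = ∫ s in (0:ℝ)..1,
      cfc (fun t : ℝ => t ^ (1 - s)) (Γ ρ) * C * cfc (fun t : ℝ => t ^ s) ρ) :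
    ∀ C, Γ ((sharp C)ᴴ) = sharp (Γ Cᴴ) := by
  -- basic self-adjointness facts
  have hρH : ρ.IsHermitian := hρ.1
  have hρSA : IsSelfAdjoint ρ := hρH
  have hΓρSA : _root_.IsSelfAdjoint (Γ ρ) := by
    rw [_root_.IsSelfAdjoint, ← map_star]
    exact congrArg Γ hρSA
  have hΓρH : (Γ ρ).IsHermitian := hΓρSA
  -- spectrum of Γ ρ equals spectrum of ρ
  have hspec : spectrum ℝ (Γ ρ) = spectrum ℝ ρ := by
    ext r
    rw [show (r ∈ spectrum ℝ (Γ ρ)) ↔ ((algebraMap ℝ ℂ) r ∈ spectrum ℂ (Γ ρ)) from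
        (spectrum.algebraMap_mem_iff ℂ).symm,
      show (r ∈ spectrum ℝ ρ) ↔ ((algebraMap ℝ ℂ) r ∈ spectrum ℂ ρ) from
        (spectrum.algebraMap_mem_iff ℂ).symm,
      AlgEquiv.spectrum_eq Γ ρ]
  -- eigenvalues of Γ ρ are positive
  have hΓρpos : ∀ i, 0 < hΓρH.eigenvalues i := by
    intro i
    have h1 : hΓρH.eigenvalues i ∈ spectrum ℝ (Γ ρ) := by
      rw [hΓρH.spectrum_real_eq_range_eigenvalues]; exact ⟨i, rfl⟩
    rw [hspec, hρH.spectrum_real_eq_range_eigenvalues] at h1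
    obtain ⟨j, hj⟩ := h1
    exact hj ▸ hρ.eigenvalues_pos j
  -- Γ as a continuous ℝ-linear map
  have hΓsmulR : ∀ (r : ℝ) (X : Matrix (Fin m) (Fin m) ℂ), Γ (r • X) = r • Γ X := by
    intro r X
    rw [← algebraMap_smul ℂ r X, _root_.map_smul, algebraMap_smul]
  let L : Matrix (Fin m) (Fin m) ℂ →ₗ[ℝ] Matrix (Fin m) (Fin m) ℂ :=
    { toFun := fun X => Γ (Xᴴ)
      map_add' := by
        intro X Y
        show Γ ((X + Y)ᴴ) = Γ (Xᴴ) + Γ (Yᴴ)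
        rw [conjTranspose_add, map_add]
      map_smul' := by
        intro r X
        show Γ ((r • X)ᴴ) = r • Γ (Xᴴ)
        rw [conjTranspose_smul, star_trivial, hΓsmulR] }
  have hLcont : Continuous L := L.continuous_of_finiteDimensional
  have hΓcont : Continuous Γ := by
    let L' : Matrix (Fin m) (Fin m) ℂ →ₗ[ℂ] Matrix (Fin m) (Fin m) ℂ :=
      { toFun := Γ, map_add' := map_add Γ, map_smul' := map_smul Γ }
    exact L'.continuous_of_finiteDimensional
  -- continuity of the cfc maps
  have hcont1 : Continuous (fun s : ℝ => cfc (fun t : ℝ => t ^ (1 - s)) (Γ ρ)) :=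
    continuous_cfc_rpow_aux hΓρH hΓρpos (fun s => 1 - s)
      (continuous_const.sub continuous_id)
  have hcont2 : Continuous (fun s : ℝ => cfc (fun t : ℝ => t ^ s) ρ) :=
    continuous_cfc_rpow_aux hρH hρ.eigenvalues_pos id continuous_id
  -- continuity of cfc on the spectrum (for map_cfc)
  have hspecpos : ∀ (B : Matrix (Fin m) (Fin m) ℂ) (hB : B.IsHermitian),
      (∀ i, 0 < hB.eigenvalues i) → ∀ s : ℝ,
      ContinuousOn (fun t : ℝ => t ^ s) (spectrum ℝ B) := by
    intro B hB hBpos s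
    intro t ht
    have : 0 < t := by
      rw [hB.spectrum_real_eq_range_eigenvalues] at ht
      obtain ⟨j, hj⟩ := ht
      exact hj ▸ hBpos j
    exact (Real.continuousAt_rpow_const t s (Or.inl this.ne')).continuousWithinAt
  intro C
  -- the integrand of sharp C
  set f : ℝ → Matrix (Fin m) (Fin m) ℂ := fun s =>
    cfc (fun t : ℝ => t ^ (1 - s)) (Γ ρ) * C * cfc (fun t : ℝ => t ^ s) ρ with hf
  have hfcont : Continuous f := (hcont1.mul continuous_const).mul hcont2
  have hfint := hfcont.intervalIntegrable (E := Matrix (Fin m) (Fin m) ℂ) (μ := volume) 0 1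
  -- push L through the integral
  have step1 : Γ ((sharp C)ᴴ) = ∫ s in (0:ℝ)..1, Γ ((f s)ᴴ) := by
    rw [hsharp C]
    exact (L.toContinuousLinearMap.intervalIntegral_comp_comm hfint).symm
  -- compute Γ ((f s)ᴴ)
  have step2 : ∀ s : ℝ, Γ ((f s)ᴴ) =
      cfc (fun t : ℝ => t ^ s) (Γ ρ) * Γ Cᴴ * cfc (fun t : ℝ => t ^ (1 - s)) ρ := by
    intro s
    have hA : _root_.IsSelfAdjoint (cfc (fun t : ℝ => t ^ (1 - s)) (Γ ρ)) := IsSelfAdjoint.cfc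
    have hB : _root_.IsSelfAdjoint (cfc (fun t : ℝ => t ^ s) ρ) := IsSelfAdjoint.cfc
    have hA' : (cfc (fun t : ℝ => t ^ (1 - s)) (Γ ρ))ᴴ = cfc (fun t : ℝ => t ^ (1 - s)) (Γ ρ) := hA
    have hB' : (cfc (fun t : ℝ => t ^ s) ρ)ᴴ = cfc (fun t : ℝ => t ^ s) ρ := hB
    have h1 : (f s)ᴴ = cfc (fun t : ℝ => t ^ s) ρ * Cᴴ * cfc (fun t : ℝ => t ^ (1 - s)) (Γ ρ) := by
      rw [hf]
      simp only [conjTranspose_mul]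
      rw [hA', hB', ← mul_assoc]
    rw [h1, _root_.map_mul, _root_.map_mul]
    congr 1
    · congr 1
      exact StarAlgHomClass.map_cfc Γ _ ρ (hspecpos ρ hρH hρ.eigenvalues_pos s) hΓcont hρSA hΓρSA
    · rw [StarAlgHomClass.map_cfc Γ _ (Γ ρ) (hspecpos (Γ ρ) hΓρH hΓρpos (1 - s)) hΓcont hΓρSA
        (by rw [hΓΓ]; exact hρSA), hΓΓ]
  -- change of variables s ↦ 1 - s on the right-hand side
  have step3 : sharp (Γ Cᴴ) = ∫ s in (0:ℝ)..1,
      cfc (fun t : ℝ => t ^ s) (Γ ρ) * Γ Cᴴ * cfc (fun t : ℝ => t ^ (1 - s)) ρ := by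
    rw [hsharp (Γ Cᴴ)]
    have := intervalIntegral.integral_comp_sub_left (a := 0) (b := 1)
      (fun s : ℝ => cfc (fun t : ℝ => t ^ (1 - s)) (Γ ρ) * Γ Cᴴ * cfc (fun t : ℝ => t ^ s) ρ) 1
    simp only [sub_sub_cancel, sub_zero, sub_self] at this
    exact this.symm
  rw [step1, step3]
  exact intervalIntegral.integral_congr fun s _ => step2 s
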